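/- For the map f: M_m → M_n defined on singletons and extended by f(⋃ I) = ⋃ f[I], and nonempty sets I ⊆ {1,...,m}, J ⊆ {1,...,n}: f(I) forces α_J under u_n if and only if I forces α_J under w_m, where α_J := ¬¬⋁_{j∈J} α_j; consequently f(I) and I agree on all formulas of the form σ(p) where σ(p) is a disjunction of formulas α_J. -/

import Mathlib

inductive Fml : Type where
  | atom : ℕ → Fml
  | bot  : Fml
  | and  : Fml → Fml → Fml
  | or   : Fml → Fml → Fml
  | imp  : Fml → Fml → Fml
deriving DecidableEq

/-- Intuitionistic negation: ¬φ := φ → ⊥. -/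
def Fml.neg (φ : Fml) : Fml := .imp φ .bot

/-- Biconditional. -/
def Fml.iff (φ ψ : Fml) : Fml := .and (.imp φ ψ) (.imp ψ φ)

/-- Disjunction of a list of formulas (empty disjunction is ⊥). -/
def disj : List Fml → Fml
  | [] => .bot
  | [φ] => φ
  | φ :: l => .or φ (disj l)

/-- Conjunction of a list of formulas (empty conjunction is ¬⊥). -/
def conj : List Fml → Fml
  | [] => Fml.neg .bot
  | [φ] => φ
  | φ :: l => .and φ (conj l)

/-- Substitution, extended homomorphically. -/
def Fml.subst (σ : ℕ → Fml) : Fml → Fml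
  | .atom p => σ p
  | .bot => .bot
  | .and φ ψ => .and (φ.subst σ) (ψ.subst σ)
  | .or φ ψ => .or (φ.subst σ) (ψ.subst σ)
  | .imp φ ψ => .imp (φ.subst σ) (ψ.subst σ)

/-- Hilbert-style provability for intuitionistic logic plus extra axioms `Ax`. -/
inductive Prov (Ax : Fml → Prop) : Fml → Prop where
  | ax {φ} : Ax φ → Prov Ax φ
  | k {φ ψ} : Prov Ax (.imp φ (.imp ψ φ))
  | s {φ ψ χ} : Prov Ax (.imp (.imp φ (.imp ψ χ)) (.imp (.imp φ ψ) (.imp φ χ)))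
  | andI {φ ψ} : Prov Ax (.imp φ (.imp ψ (.and φ ψ)))
  | andE₁ {φ ψ} : Prov Ax (.imp (.and φ ψ) φ)
  | andE₂ {φ ψ} : Prov Ax (.imp (.and φ ψ) ψ)
  | orI₁ {φ ψ} : Prov Ax (.imp φ (.or φ ψ))
  | orI₂ {φ ψ} : Prov Ax (.imp ψ (.or φ ψ))
  | orE {φ ψ χ} : Prov Ax (.imp (.imp φ χ) (.imp (.imp ψ χ) (.imp (.or φ ψ) χ)))
  | exfalso {φ} : Prov Ax (.imp .bot φ)
  | mp {φ ψ} : Prov Ax (.imp φ ψ) → Prov Ax φ → Prov Ax ψ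

/-- No extra axioms: pure intuitionistic logic is `Prov NoAx`. -/
def NoAx : Fml → Prop := fun _ => False

/-- Instances of the weak Kreisel–Putnam axiom schema. -/
def wKPAx : Fml → Prop := fun φ =>
  ∃ a b c : Fml, φ = .imp (.imp a.neg (.or b.neg c.neg))
    (.or (.imp a.neg b.neg) (.imp a.neg c.neg))

/-- Intuitionistic Kripke forcing over a preordered set of worlds. -/
def Force {W : Type} [Preorder W] (V : W → ℕ → Prop) : W → Fml → Prop
  | w, .atom p => V w p
  | _, .bot => False
  | w, .and φ ψ => Force V w φ ∧ Force V w ψ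
  | w, .or φ ψ => Force V w φ ∨ Force V w ψ
  | w, .imp φ ψ => ∀ v, w ≤ v → Force V v φ → Force V v ψ

/-- A valuation is monotone (persistent). -/
def MonoVal {W : Type} [Preorder W] (V : W → ℕ → Prop) : Prop :=
  ∀ ⦃w w'⦄, w ≤ w' → ∀ p, V w p → V w' p

/-- The Medvedev frame `M n`: nonempty subsets of `Fin n` ordered by reverse inclusion. -/
def Med (n : ℕ) : Type := {I : Finset (Fin n) // I.Nonempty}

instance {n : ℕ} : PartialOrder (Med n) where
  le I J := J.1 ⊆ I.1
  le_refl I := Finset.Subset.refl _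
  le_trans I J K h h' := Finset.Subset.trans h' h
  le_antisymm I J h h' := Subtype.ext (Finset.Subset.antisymm h' h)

instance {n : ℕ} : DecidableEq (Med n) := Subtype.instDecidableEq

/-- Validity on the Medvedev frame `M n`. -/
def MedValid (n : ℕ) (φ : Fml) : Prop :=
  ∀ V : Med n → ℕ → Prop, MonoVal V → ∀ w, Force V w φ

/-- Medvedev's logic of finite problems. -/
def ML (φ : Fml) : Prop := ∀ n, MedValid n φ

/-- The singleton world `{i}` of `M n`. -/
def single {n : ℕ} (i : Fin n) : Med n := ⟨{i}, Finset.singleton_nonempty i⟩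

/-- Exponentiation on ℕ∞ (anything involving ∞ gives ∞). -/
def epow : ℕ∞ → ℕ∞ → ℕ∞
  | some a, some b => some (a ^ b)
  | _, _ => ⊤

/-- Kreisel–Putnam rank. -/
def rank : Fml → ℕ∞
  | .imp _ .bot => 1
  | .or φ ψ => rank φ + rank ψ
  | .and φ ψ => rank φ * rank ψ
  | .imp φ ψ => epow (rank ψ) (rank φ)
  | _ => ⊤

/-- Disjunction of `α i` over a finite index set. -/
noncomputable def bigOrOn {n : ℕ} (α : Fin n → Fml) (I : Finset (Fin n)) : Fml :=
  disj (I.toList.map α)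

/-- `α_I := ¬¬⋁_{i ∈ I} α_i`. -/
noncomputable def alphaF {n : ℕ} (α : Fin n → Fml) (I : Finset (Fin n)) : Fml :=
  Fml.neg (Fml.neg (bigOrOn α I))

lemma force_disj {W : Type} [Preorder W] (V : W → ℕ → Prop) (v : W) :
    ∀ L : List Fml, Force V v (disj L) ↔ ∃ φ ∈ L, Force V v φ
  | [] => by simp [disj, Force]
  | [φ] => by simp [disj]
  | φ :: ψ :: l => by
    have ih := force_disj V v (ψ :: l)
    simp only [disj, Force, ih]
    constructor
    · rintro (h | ⟨χ, hχ, h⟩)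
      · exact ⟨φ, List.mem_cons_self, h⟩
      · exact ⟨χ, List.mem_cons_of_mem _ hχ, h⟩
    · rintro ⟨χ, hχ, h⟩
      rcases List.mem_cons.1 hχ with rfl | hχ
      · exact Or.inl h
      · exact Or.inr ⟨χ, hχ, h⟩

lemma le_single {n : ℕ} (v : Med n) (i : Fin n) (hi : i ∈ v.1) : v ≤ single i :=
  Finset.singleton_subset_iff.2 hi

lemma eq_single {n : ℕ} (v : Med n) (i : Fin n) (h : single i ≤ v) : v = single i := by
  apply Subtype.ext
  exact Finset.eq_singleton_iff_nonempty_unique_mem.2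
    ⟨v.2, fun x hx => Finset.mem_singleton.1 (h hx)⟩

/-- for the p-morphism `f : M m → M n` built from `w`, the worlds `f I`
(under the universal valuation `u`) and `I` (under `w`) agree on all formulas `α_J`, and
hence on all disjunctions of such formulas. -/
theorem stmt19 (m n : ℕ) (α : Fin n → Fml)
    (w : Med m → ℕ → Prop) (u : Med n → ℕ → Prop)
    (hw : MonoVal w) (hu : MonoVal u)
    (huniv : ∀ (K : Med n) (J : Finset (Fin n)), J.Nonempty →
      (Force u K (alphaF α J) ↔ K.1 ⊆ J))
    (hsing : ∀ i : Fin m, ∃! j : Fin n, Force w (single i) (α j))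
    (hexh : ∀ I : Med m, Force w I (Fml.neg (Fml.neg (disj (List.ofFn α)))))
    (f : Med m → Med n)
    (hf1 : ∀ i : Fin m, ∃ j : Fin n, f (single i) = single j ∧ Force w (single i) (α j))
    (hf2 : ∀ I : Med m, (f I).1 = I.1.biUnion (fun i => (f (single i)).1)) :
    (∀ (I : Med m) (J : Finset (Fin n)), J.Nonempty →
      (Force u (f I) (alphaF α J) ↔ Force w I (alphaF α J))) ∧
    (∀ (I : Med m) (Ls : List (Finset (Fin n))), (∀ J ∈ Ls, J.Nonempty) →
      (Force u (f I) (disj (Ls.map (alphaF α))) ↔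
        Force w I (disj (Ls.map (alphaF α))))) := by
  have key : ∀ (I : Med m) (J : Finset (Fin n)), J.Nonempty →
      (Force u (f I) (alphaF α J) ↔ Force w I (alphaF α J)) := by
    intro I J hJ
    rw [huniv (f I) J hJ]
    constructor
    · intro h
      intro v hv hneg
      obtain ⟨i, hi⟩ := v.2
      have hvIi : i ∈ I.1 := hv hi
      obtain ⟨j, hfj, hαj⟩ := hf1 i
      have hjJ : j ∈ J := by
        apply h
        rw [hf2 I]
        exact Finset.mem_biUnion.2 ⟨i, hvIi, by rw [hfj]; exact Finset.mem_singleton_self j⟩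
      have hforce : Force w (single i) (bigOrOn α J) := by
        refine (force_disj w (single i) _).2 ⟨α j, List.mem_map_of_mem (f := α) ?_, hαj⟩
        exact Finset.mem_toList.2 hjJ
      exact hneg (single i) (le_single v i hi) hforce
    · intro h j hj
      rw [hf2 I] at hj
      obtain ⟨i, hiI, hji⟩ := Finset.mem_biUnion.1 hj
      obtain ⟨j', hfj', hαj'⟩ := hf1 i
      rw [hfj'] at hji
      have hjj' : j = j' := Finset.mem_singleton.1 hji
      subst hjj'
      by_contra hjJ
      apply h (single i) (le_single I i hiI)
      intro v' hle hX
      have hv' : v' = single i := eq_single v' i hle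
      subst hv'
      obtain ⟨φ, hφ, hφf⟩ := (force_disj w (single i) _).1 hX
      obtain ⟨j₂, hj₂, rfl⟩ := List.mem_map.1 hφ
      obtain ⟨j₀, _, huniq⟩ := hsing i
      have e1 : j₂ = j₀ := huniq j₂ hφf
      have e2 : j = j₀ := huniq j hαj'
      exact hjJ (e2 ▸ e1 ▸ Finset.mem_toList.1 hj₂)
  refine ⟨key, ?_⟩
  intro I Ls hLs
  rw [force_disj, force_disj]
  constructor
  · rintro ⟨φ, hφ, h⟩
    obtain ⟨J, hJ, rfl⟩ := List.mem_map.1 hφ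
    exact ⟨_, hφ, (key I J (hLs J hJ)).1 h⟩
  · rintro ⟨φ, hφ, h⟩
    obtain ⟨J, hJ, rfl⟩ := List.mem_map.1 hφ
    exact ⟨_, hφ, (key I J (hLs J hJ)).2 h⟩
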